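/- Let λ₁ = −2/k₁ and let L_λ = Id − λ DΓ[0] be the linearization at the trivial solution, where DΓ[0](v)(θ) = −(1/(2π)) ∫₀^{2π} K̂(θ − θ') v(θ') dθ' for v ∈ X. Then: (i) for 0 < λ < λ₁, L_λ is positive definite on X, namely ⟨L_λ v, v⟩_{L²} ≥ (1 − λ|k₁|/2) ‖v‖² > 0 for all v ∈ X; (ii) for λ > λ₁, there exists v ∈ X (e.g. v(θ) = cos(2θ)) with ⟨L_λ v, v⟩_{L²} < 0. Hence the trivial solution u ≡ 0 is linearly stable for λ < λ₁ and unstable for λ > λ₁. -/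

import Mathlib

open MeasureTheory Filter Topology Real intervalIntegral

/-- `Γ[u](θ) = (∫₀^{2π} e^{-u})⁻¹ ∫₀^{2π} K̂(θ - θ') e^{-u(θ')} dθ'`. -/
noncomputable def Gam (K u : ℝ → ℝ) (θ : ℝ) : ℝ :=
  (∫ t in (0:ℝ)..(2 * π), Real.exp (-(u t)))⁻¹ *
    ∫ t in (0:ℝ)..(2 * π), K (θ - t) * Real.exp (-(u t))

/-- Membership in `X = {u ∈ L²([0,2π]) : u(θ) = u(θ+π) a.e., u(θ) = u(2π-θ) a.e.,
∫₀^{2π} u = 0}`, for a (2π-periodic) representative `u : ℝ → ℝ`. -/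
def MemX (u : ℝ → ℝ) : Prop :=
  MemLp u 2 (volume.restrict (Set.Ioc (0:ℝ) (2 * π))) ∧
  (∀ᵐ θ : ℝ, u (θ + π) = u θ) ∧
  (∀ᵐ θ : ℝ, u (2 * π - θ) = u θ) ∧
  (∫ θ in (0:ℝ)..(2 * π), u θ) = 0

/-- `‖K̂‖_∞ = sup_{θ ∈ [0,2π]} |K̂(θ)|`. -/
noncomputable def supNorm (K : ℝ → ℝ) : ℝ := ⨆ θ : Set.Icc (0:ℝ) (2 * π), |K θ|

/-- The mean `∫₀^{2π} f dμ_u` of `f` against the probability measure `μ_u` with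
density `e^{-u}/∫₀^{2π} e^{-u}`. -/
noncomputable def mAvg (u f : ℝ → ℝ) : ℝ :=
  (∫ t in (0:ℝ)..(2 * π), Real.exp (-(u t)))⁻¹ *
    ∫ t in (0:ℝ)..(2 * π), f t * Real.exp (-(u t))

/-- The linearization `L_λ = Id - λ DΓ[0]`, where
`DΓ[0](v)(θ) = -(1/(2π)) ∫₀^{2π} K̂(θ-θ') v(θ') dθ'` on mean-zero functions. -/
noncomputable def Llin (K : ℝ → ℝ) (lam : ℝ) (v : ℝ → ℝ) (θ : ℝ) : ℝ :=
  v θ + lam * ((1 / (2 * π)) * ∫ t in (0:ℝ)..(2 * π), K (θ - t) * v t)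


lemma intCos (j : ℤ) (hj : j ≠ 0) : ∫ x in (0:ℝ)..(2*π), Real.cos (j * x) = 0 := by
  have hj' : (j:ℝ) ≠ 0 := Int.cast_ne_zero.mpr hj
  rw [intervalIntegral.integral_comp_mul_left Real.cos hj', integral_cos]
  have h1 : (j:ℝ) * (2 * π) = (2*j : ℤ) * π := by push_cast; ring
  have h2 : Real.sin ((j:ℝ) * (2 * π)) = 0 := by rw [h1]; exact Real.sin_int_mul_pi _
  simp [h2]

lemma intSin (j : ℤ) : ∫ x in (0:ℝ)..(2*π), Real.sin (j * x) = 0 := by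
  rcases eq_or_ne j 0 with rfl | hj
  · simp
  have hj' : (j:ℝ) ≠ 0 := Int.cast_ne_zero.mpr hj
  rw [intervalIntegral.integral_comp_mul_left Real.sin hj', integral_sin]
  have h2 : Real.cos ((j:ℝ) * (2 * π)) = 1 := Real.cos_int_mul_two_pi _
  simp [h2]

lemma ii (c : ℝ) : IntervalIntegrable (fun x => Real.cos (c * x)) volume 0 (2*π) :=
  (Real.continuous_cos.comp (continuous_const.mul continuous_id)).intervalIntegrable _ _

lemma iis (c : ℝ) : IntervalIntegrable (fun x => Real.sin (c * x)) volume 0 (2*π) :=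
  (Real.continuous_sin.comp (continuous_const.mul continuous_id)).intervalIntegrable _ _

lemma intCosCos (p q : ℤ) (hpq : p + q ≠ 0) :
    ∫ x in (0:ℝ)..(2*π), Real.cos (p*x) * Real.cos (q*x) = if p = q then π else 0 := by
  have key : ∀ x ∈ Set.uIcc (0:ℝ) (2*π), Real.cos ((p:ℝ)*x) * Real.cos ((q:ℝ)*x)
      = (Real.cos (((p-q:ℤ):ℝ) * x) + Real.cos (((p+q:ℤ):ℝ) * x)) / 2 := by
    intro x _; push_cast
    rw [sub_mul, add_mul, Real.cos_sub, Real.cos_add]; ring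
  rw [intervalIntegral.integral_congr key, intervalIntegral.integral_div,
    intervalIntegral.integral_add (ii _) (ii _), intCos _ hpq]
  by_cases h : p = q
  · subst h
    simp only [sub_self, Int.cast_zero, zero_mul, Real.cos_zero]
    rw [intervalIntegral.integral_const]
    simp
  · rw [intCos _ (sub_ne_zero.mpr h)]
    simp [h]

lemma intSinSin (p q : ℤ) (hpq : p + q ≠ 0) :
    ∫ x in (0:ℝ)..(2*π), Real.sin (p*x) * Real.sin (q*x) = if p = q then π else 0 := by
  have key : ∀ x ∈ Set.uIcc (0:ℝ) (2*π), Real.sin ((p:ℝ)*x) * Real.sin ((q:ℝ)*x)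
      = (Real.cos (((p-q:ℤ):ℝ) * x) - Real.cos (((p+q:ℤ):ℝ) * x)) / 2 := by
    intro x _; push_cast
    rw [sub_mul, add_mul, Real.cos_sub, Real.cos_add]; ring
  rw [intervalIntegral.integral_congr key, intervalIntegral.integral_div,
    intervalIntegral.integral_sub (ii _) (ii _), intCos _ hpq]
  by_cases h : p = q
  · subst h
    simp only [sub_self, Int.cast_zero, zero_mul, Real.cos_zero]
    rw [intervalIntegral.integral_const]
    simp
  · rw [intCos _ (sub_ne_zero.mpr h)]
    simp [h]

lemma intSinCos (p q : ℤ) :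
    ∫ x in (0:ℝ)..(2*π), Real.sin (p*x) * Real.cos (q*x) = 0 := by
  have key : ∀ x ∈ Set.uIcc (0:ℝ) (2*π), Real.sin ((p:ℝ)*x) * Real.cos ((q:ℝ)*x)
      = (Real.sin (((p+q:ℤ):ℝ) * x) + Real.sin (((p-q:ℤ):ℝ) * x)) / 2 := by
    intro x _; push_cast
    rw [sub_mul, add_mul, Real.sin_sub, Real.sin_add]; ring
  rw [intervalIntegral.integral_congr key, intervalIntegral.integral_div,
    intervalIntegral.integral_add (iis _) (iis _), intSin, intSin]
  norm_num


noncomputable def Acos (w : ℝ → ℝ) (n : ℝ) : ℝ :=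
  ∫ t in Set.Ioc (0:ℝ) (2*π), Real.cos (n * t) * w t
noncomputable def Bsin (w : ℝ → ℝ) (n : ℝ) : ℝ :=
  ∫ t in Set.Ioc (0:ℝ) (2*π), Real.sin (n * t) * w t

lemma absA {w : ℝ → ℝ} (hw : Integrable w (volume.restrict (Set.Ioc (0:ℝ) (2*π)))) (n : ℝ) :
    |Acos w n| ≤ ∫ t in Set.Ioc (0:ℝ) (2*π), |w t| := by
  rw [← Real.norm_eq_abs]
  simp only [Acos]
  refine (MeasureTheory.norm_integral_le_integral_norm _).trans ?_
  refine integral_mono_of_nonneg (Filter.Eventually.of_forall fun t => norm_nonneg _) hw.abs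
    (Filter.Eventually.of_forall fun t => ?_)
  simp only [norm_mul, Real.norm_eq_abs]
  calc |Real.cos (n*t)| * |w t| ≤ 1 * |w t| :=
        mul_le_mul_of_nonneg_right (Real.abs_cos_le_one _) (abs_nonneg _)
    _ = |w t| := one_mul _

lemma absB {w : ℝ → ℝ} (hw : Integrable w (volume.restrict (Set.Ioc (0:ℝ) (2*π)))) (n : ℝ) :
    |Bsin w n| ≤ ∫ t in Set.Ioc (0:ℝ) (2*π), |w t| := by
  rw [← Real.norm_eq_abs]
  simp only [Bsin]
  refine (MeasureTheory.norm_integral_le_integral_norm _).trans ?_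
  refine integral_mono_of_nonneg (Filter.Eventually.of_forall fun t => norm_nonneg _) hw.abs
    (Filter.Eventually.of_forall fun t => ?_)
  simp only [norm_mul, Real.norm_eq_abs]
  calc |Real.sin (n*t)| * |w t| ≤ 1 * |w t| :=
        mul_le_mul_of_nonneg_right (Real.abs_sin_le_one _) (abs_nonneg _)
    _ = |w t| := one_mul _

lemma expandInner (k : ℕ → ℝ) (hsum : Summable fun m => |k m|) {K : ℝ → ℝ}
    (hK : ∀ θ : ℝ, HasSum (fun m : ℕ => k (m + 1) * Real.cos (2 * (m + 1) * θ)) (K θ))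
    {w : ℝ → ℝ} (hw : Integrable w (volume.restrict (Set.Ioc (0:ℝ) (2*π)))) (θ : ℝ) :
    HasSum (fun m : ℕ => k (m+1) * (Real.cos (2 * (m+1) * θ) * Acos w (2 * (m+1))
        + Real.sin (2 * (m+1) * θ) * Bsin w (2 * (m+1))))
      (∫ t in Set.Ioc (0:ℝ) (2*π), K (θ - t) * w t) := by
  set μ := volume.restrict (Set.Ioc (0:ℝ) (2*π)) with hμ
  set F : ℕ → ℝ → ℝ := fun m t => k (m+1) * Real.cos (2 * (m+1) * (θ - t)) * w t with hF
  have hFint : ∀ m, Integrable (F m) μ := by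
    intro m
    exact hw.bdd_mul ((Real.continuous_cos.comp (by fun_prop)).aestronglyMeasurable.const_mul _)
      (Filter.Eventually.of_forall fun x => by
        rw [norm_mul, Real.norm_eq_abs, Real.norm_eq_abs]
        calc |k (m+1)| * |Real.cos _| ≤ |k (m+1)| * 1 :=
              mul_le_mul_of_nonneg_left (Real.abs_cos_le_one _) (abs_nonneg _)
          _ = |k (m+1)| := mul_one _)
  have hFsum : Summable fun m => ∫ t, ‖F m t‖ ∂μ := by
    refine Summable.of_nonneg_of_le (fun m => integral_nonneg fun t => norm_nonneg _)
      (fun m => ?_) (((summable_nat_add_iff 1).mpr hsum).mul_right (∫ t, |w t| ∂μ))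
    have hub : ∀ t : ℝ, ‖F m t‖ ≤ |k (m+1)| * |w t| := by
      intro t
      simp only [hF, norm_mul, Real.norm_eq_abs]
      calc |k (m+1)| * |Real.cos (2 * ((m:ℝ)+1) * (θ - t))| * |w t|
          ≤ |k (m+1)| * 1 * |w t| := by
            gcongr; exact Real.abs_cos_le_one _
        _ = |k (m+1)| * |w t| := by ring
    calc (∫ t, ‖F m t‖ ∂μ) ≤ ∫ t, |k (m+1)| * |w t| ∂μ :=
          integral_mono_of_nonneg (Filter.Eventually.of_forall fun t => norm_nonneg _)
            (hw.abs.const_mul _) (Filter.Eventually.of_forall hub)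
      _ = |k (m+1)| * ∫ t, |w t| ∂μ := MeasureTheory.integral_const_mul _ _
  have key := MeasureTheory.hasSum_integral_of_summable_integral_norm hFint hFsum
  have hpt : (fun t => ∑' m, F m t) =ᵐ[μ] fun t => K (θ - t) * w t := by
    refine Filter.Eventually.of_forall fun t => ?_
    exact ((hK (θ - t)).mul_right (w t)).tsum_eq
  rw [integral_congr_ae hpt] at key
  convert key using 2 with m
  on_goal 1 => rfl
  have hcos : ∀ t : ℝ, Real.cos (2 * (m+1) * (θ - t))
      = Real.cos (2*(m+1)*θ) * Real.cos (2*(m+1)*t) + Real.sin (2*(m+1)*θ) * Real.sin (2*(m+1)*t) := by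
    intro t
    rw [show 2 * ((m:ℝ)+1) * (θ - t) = 2*(m+1)*θ - 2*(m+1)*t by ring, Real.cos_sub]
  have : F m = fun t => k (m+1) * (Real.cos (2*(m+1)*θ) * (Real.cos (2*(m+1)*t) * w t)
      + Real.sin (2*(m+1)*θ) * (Real.sin (2*(m+1)*t) * w t)) := by
    funext t; rw [hF]; simp only; rw [hcos t]; ring
  rw [this, MeasureTheory.integral_const_mul]
  have i1 : Integrable (fun t => Real.cos (2*((m:ℝ)+1)*t) * w t) μ :=
    hw.bdd_mul (Real.continuous_cos.comp (by fun_prop)).aestronglyMeasurable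
      (Filter.Eventually.of_forall fun x => by rw [Real.norm_eq_abs]; exact Real.abs_cos_le_one _)
  have i2 : Integrable (fun t => Real.sin (2*((m:ℝ)+1)*t) * w t) μ :=
    hw.bdd_mul (Real.continuous_sin.comp (by fun_prop)).aestronglyMeasurable
      (Filter.Eventually.of_forall fun x => by rw [Real.norm_eq_abs]; exact Real.abs_sin_le_one _)
  rw [MeasureTheory.integral_add (i1.const_mul _) (i2.const_mul _), MeasureTheory.integral_const_mul, MeasureTheory.integral_const_mul]
  rfl


lemma expandQ (k : ℕ → ℝ) (hsum : Summable fun m => |k m|) {K : ℝ → ℝ}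
    (hK : ∀ θ : ℝ, HasSum (fun m : ℕ => k (m + 1) * Real.cos (2 * (m + 1) * θ)) (K θ))
    {w : ℝ → ℝ} (hw : Integrable w (volume.restrict (Set.Ioc (0:ℝ) (2*π)))) :
    HasSum (fun m : ℕ => k (m+1) * ((Acos w (2 * (m+1)))^2 + (Bsin w (2 * (m+1)))^2))
      (∫ θ in Set.Ioc (0:ℝ) (2*π), (∫ t in Set.Ioc (0:ℝ) (2*π), K (θ - t) * w t) * w θ) := by
  set μ := volume.restrict (Set.Ioc (0:ℝ) (2*π)) with hμ
  set C : ℝ := ∫ t, |w t| ∂μ with hC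
  have hC0 : 0 ≤ C := integral_nonneg fun t => abs_nonneg _
  set G : ℕ → ℝ → ℝ := fun m θ => k (m+1) * (Real.cos (2 * (m+1) * θ) * Acos w (2 * (m+1))
      + Real.sin (2 * (m+1) * θ) * Bsin w (2 * (m+1))) * w θ with hG
  have hub : ∀ m, ∀ θ : ℝ, ‖k (m+1) * (Real.cos (2 * (m+1) * θ) * Acos w (2 * (m+1))
      + Real.sin (2 * (m+1) * θ) * Bsin w (2 * (m+1)))‖ ≤ |k (m+1)| * (2 * C) := by
    intro m θ
    rw [norm_mul, Real.norm_eq_abs, Real.norm_eq_abs]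
    refine mul_le_mul_of_nonneg_left ?_ (abs_nonneg _)
    calc |Real.cos (2 * ((m:ℝ)+1) * θ) * Acos w (2 * (m+1))
          + Real.sin (2 * ((m:ℝ)+1) * θ) * Bsin w (2 * (m+1))|
        ≤ |Real.cos (2 * ((m:ℝ)+1) * θ) * Acos w (2 * (m+1))|
          + |Real.sin (2 * ((m:ℝ)+1) * θ) * Bsin w (2 * (m+1))| := abs_add_le _ _
      _ ≤ 1 * C + 1 * C := by
          rw [abs_mul, abs_mul]
          have h3 : |Acos w (2 * ((m:ℝ)+1))| ≤ C := absA hw _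
          have h4 : |Bsin w (2 * ((m:ℝ)+1))| ≤ C := absB hw _
          exact add_le_add
            (mul_le_mul (Real.abs_cos_le_one _) h3 (abs_nonneg _) one_pos.le)
            (mul_le_mul (Real.abs_sin_le_one _) h4 (abs_nonneg _) one_pos.le)
      _ = 2 * C := by ring
  have hGint : ∀ m, Integrable (G m) μ := by
    intro m
    have hcont : Continuous fun θ : ℝ => k (m+1) * (Real.cos (2 * (m+1) * θ) * Acos w (2 * (m+1))
        + Real.sin (2 * (m+1) * θ) * Bsin w (2 * (m+1))) := by fun_prop
    exact hw.bdd_mul hcont.aestronglyMeasurable (Filter.Eventually.of_forall (hub m))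
  have hGsum : Summable fun m => ∫ θ, ‖G m θ‖ ∂μ := by
    refine Summable.of_nonneg_of_le (fun m => integral_nonneg fun t => norm_nonneg _)
      (fun m => ?_) ((((summable_nat_add_iff 1).mpr hsum).mul_right (2 * C)).mul_right C)
    have hub2 : ∀ θ : ℝ, ‖G m θ‖ ≤ (|k (m+1)| * (2*C)) * |w θ| := by
      intro θ
      rw [hG]
      simp only
      rw [norm_mul]
      rw [Real.norm_eq_abs (w θ)]
      exact mul_le_mul_of_nonneg_right (hub m θ) (abs_nonneg _)
    calc (∫ θ, ‖G m θ‖ ∂μ) ≤ ∫ θ, (|k (m+1)| * (2*C)) * |w θ| ∂μ :=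
          integral_mono_of_nonneg (Filter.Eventually.of_forall fun t => norm_nonneg _)
            (hw.abs.const_mul _) (Filter.Eventually.of_forall hub2)
      _ = |k (m+1)| * (2*C) * C := by rw [MeasureTheory.integral_const_mul]
  have key := MeasureTheory.hasSum_integral_of_summable_integral_norm hGint hGsum
  have hpt : (fun θ => ∑' m, G m θ)
      =ᵐ[μ] fun θ => (∫ t in Set.Ioc (0:ℝ) (2*π), K (θ - t) * w t) * w θ := by
    refine Filter.Eventually.of_forall fun θ => ?_
    exact ((expandInner k hsum hK hw θ).mul_right (w θ)).tsum_eq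
  rw [integral_congr_ae hpt] at key
  convert key using 2 with m
  on_goal 1 => rfl
  have : G m = fun θ => k (m+1) * (Acos w (2 * (m+1)) * (Real.cos (2 * (m+1) * θ) * w θ)
      + Bsin w (2 * (m+1)) * (Real.sin (2 * (m+1) * θ) * w θ)) := by
    funext θ; rw [hG]; simp only; ring
  rw [this, MeasureTheory.integral_const_mul]
  have i1 : Integrable (fun t => Real.cos (2*((m:ℝ)+1)*t) * w t) μ :=
    hw.bdd_mul (Real.continuous_cos.comp (by fun_prop)).aestronglyMeasurable
      (Filter.Eventually.of_forall fun x => by rw [Real.norm_eq_abs]; exact Real.abs_cos_le_one _)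
  have i2 : Integrable (fun t => Real.sin (2*((m:ℝ)+1)*t) * w t) μ :=
    hw.bdd_mul (Real.continuous_sin.comp (by fun_prop)).aestronglyMeasurable
      (Filter.Eventually.of_forall fun x => by rw [Real.norm_eq_abs]; exact Real.abs_sin_le_one _)
  rw [MeasureTheory.integral_add (i1.const_mul _) (i2.const_mul _),
    MeasureTheory.integral_const_mul, MeasureTheory.integral_const_mul]
  rw [Acos, Bsin]
  ring


local notation "μ2" => volume.restrict (Set.Ioc (0:ℝ) (2*π))

instance finMeas2pi : IsFiniteMeasure μ2 := by
  constructor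
  rw [Measure.restrict_apply_univ]
  exact measure_Ioc_lt_top

lemma set_to_interval (f : ℝ → ℝ) : (∫ t, f t ∂μ2) = ∫ t in (0:ℝ)..(2*π), f t :=
  (intervalIntegral.integral_of_le (by positivity)).symm

noncomputable def trigFam : ℕ ⊕ ℕ → ℝ → ℝ :=
  Sum.elim (fun m t => Real.cos (2 * ((m:ℝ)+1) * t) / Real.sqrt π)
    (fun m t => Real.sin (2 * ((m:ℝ)+1) * t) / Real.sqrt π)

lemma trigFam_cont (i : ℕ ⊕ ℕ) : Continuous (trigFam i) := by
  cases i with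
  | inl m => exact (Real.continuous_cos.comp (by fun_prop)).div_const _
  | inr m => exact (Real.continuous_sin.comp (by fun_prop)).div_const _

lemma trigFam_memLp (i : ℕ ⊕ ℕ) : MemLp (trigFam i) 2 μ2 := by
  refine MemLp.of_bound (trigFam_cont i).aestronglyMeasurable (1 / Real.sqrt π)
    (Filter.Eventually.of_forall fun t => ?_)
  have hs : (0:ℝ) < Real.sqrt π := Real.sqrt_pos.mpr pi_pos
  cases i with
  | inl m =>
      simp only [trigFam, Sum.elim_inl, norm_div, Real.norm_eq_abs, abs_of_pos hs]
      gcongr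
      exact Real.abs_cos_le_one _
  | inr m =>
      simp only [trigFam, Sum.elim_inr, norm_div, Real.norm_eq_abs, abs_of_pos hs]
      gcongr
      exact Real.abs_sin_le_one _

/-- products of trig family integrate to Kronecker delta -/
lemma trigFam_ortho (i j : ℕ ⊕ ℕ) :
    (∫ t, trigFam i t * trigFam j t ∂μ2) = if i = j then 1 else 0 := by
  have hs : Real.sqrt π * Real.sqrt π = π := Real.mul_self_sqrt pi_pos.le
  have hcast : ∀ m : ℕ, ((2 * (m+1) : ℤ) : ℝ) = 2 * ((m:ℝ) + 1) := by intro m; push_cast; ring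
  have hpi : π ≠ 0 := pi_ne_zero
  cases i with
  | inl m =>
    cases j with
    | inl n =>
      have : (fun t => trigFam (Sum.inl m) t * trigFam (Sum.inl n) t)
          = fun t => (Real.cos (((2*(m+1):ℤ):ℝ) * t) * Real.cos (((2*(n+1):ℤ):ℝ) * t)) / π := by
        funext t; simp only [trigFam, Sum.elim_inl, hcast]
        field_simp
        rw [Real.sq_sqrt pi_pos.le]; ring
      rw [this]
      simp only [div_eq_mul_inv]
      rw [MeasureTheory.integral_mul_const, set_to_interval, intCosCos _ _ (by omega)]
      by_cases h : m = n
      · subst h; simp [hpi]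
      · have : ¬ ((2*(m+1):ℤ) = 2*(n+1)) := by omega
        simp [this, h]
    | inr n =>
      have : (fun t => trigFam (Sum.inl m) t * trigFam (Sum.inr n) t)
          = fun t => (Real.sin (((2*(n+1):ℤ):ℝ) * t) * Real.cos (((2*(m+1):ℤ):ℝ) * t)) / π := by
        funext t; simp only [trigFam, Sum.elim_inl, Sum.elim_inr, hcast]
        field_simp; rw [Real.sq_sqrt pi_pos.le]; ring
      rw [this]
      simp only [div_eq_mul_inv]
      rw [MeasureTheory.integral_mul_const, set_to_interval, intSinCos]
      simp
  | inr m =>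
    cases j with
    | inl n =>
      have : (fun t => trigFam (Sum.inr m) t * trigFam (Sum.inl n) t)
          = fun t => (Real.sin (((2*(m+1):ℤ):ℝ) * t) * Real.cos (((2*(n+1):ℤ):ℝ) * t)) / π := by
        funext t; simp only [trigFam, Sum.elim_inl, Sum.elim_inr, hcast]
        field_simp
        rw [Real.sq_sqrt pi_pos.le]; ring
      rw [this]
      simp only [div_eq_mul_inv]
      rw [MeasureTheory.integral_mul_const, set_to_interval, intSinCos]
      simp
    | inr n =>
      have : (fun t => trigFam (Sum.inr m) t * trigFam (Sum.inr n) t)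
          = fun t => (Real.sin (((2*(m+1):ℤ):ℝ) * t) * Real.sin (((2*(n+1):ℤ):ℝ) * t)) / π := by
        funext t; simp only [trigFam, Sum.elim_inr, hcast]
        field_simp
        rw [Real.sq_sqrt pi_pos.le]; ring
      rw [this]
      simp only [div_eq_mul_inv]
      rw [MeasureTheory.integral_mul_const, set_to_interval, intSinSin _ _ (by omega)]
      by_cases h : m = n
      · subst h; simp [hpi]
      · have : ¬ ((2*(m+1):ℤ) = 2*(n+1)) := by omega
        simp [this, h]

lemma besselSum {v : ℝ → ℝ} (hv : MemLp v 2 μ2) (s : Finset ℕ) :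
    ∑ m ∈ s, ((Acos v (2*((m:ℝ)+1)))^2 + (Bsin v (2*((m:ℝ)+1)))^2)
      ≤ π * ((eLpNorm v 2 μ2).toReal)^2 := by
  classical
  set e : ℕ ⊕ ℕ → Lp ℝ 2 μ2 := fun i => (trigFam_memLp i).toLp (trigFam i) with he
  have hinner : ∀ (i : ℕ ⊕ ℕ) (g : ℝ → ℝ) (hg : MemLp g 2 μ2),
      (inner ℝ (e i) (hg.toLp g) : ℝ) = ∫ t, trigFam i t * g t ∂μ2 := by
    intro i g hg
    rw [MeasureTheory.L2.inner_def]
    refine integral_congr_ae ?_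
    filter_upwards [(trigFam_memLp i).coeFn_toLp, hg.coeFn_toLp] with t h1 h2
    rw [RCLike.inner_apply, h1, h2]
    simp [mul_comm]
  have hON : Orthonormal ℝ e := by
    rw [orthonormal_iff_ite]
    intro i j
    have h1 : e j = (trigFam_memLp j).toLp (trigFam j) := rfl
    rw [h1, hinner i (trigFam j) (trigFam_memLp j), trigFam_ortho]
  set V := hv.toLp v with hV
  set N := (eLpNorm v 2 μ2).toReal with hN
  have hNV : ‖V‖ = N := MeasureTheory.Lp.norm_toLp v hv
  have hAm : ∀ m : ℕ, (inner ℝ (e (Sum.inl m)) V : ℝ) = Acos v (2*((m:ℝ)+1)) / Real.sqrt π := by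
    intro m
    rw [hV, hinner (Sum.inl m) v hv]
    simp only [trigFam, Sum.elim_inl, div_mul_eq_mul_div]
    rw [MeasureTheory.integral_div]
    rfl
  have hBm : ∀ m : ℕ, (inner ℝ (e (Sum.inr m)) V : ℝ) = Bsin v (2*((m:ℝ)+1)) / Real.sqrt π := by
    intro m
    rw [hV, hinner (Sum.inr m) v hv]
    simp only [trigFam, Sum.elim_inr, div_mul_eq_mul_div]
    rw [MeasureTheory.integral_div]
    rfl
  have hdisj : Disjoint (s.image Sum.inl) (s.image Sum.inr) := by
    rw [Finset.disjoint_left]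
    intro a ha hb
    obtain ⟨x, -, hx⟩ := Finset.mem_image.mp ha
    obtain ⟨y, -, hy⟩ := Finset.mem_image.mp hb
    rw [← hx] at hy
    simp at hy
  have key := hON.sum_inner_products_le (s := (s.image Sum.inl) ∪ (s.image Sum.inr)) V
  rw [Finset.sum_union hdisj,
    Finset.sum_image (fun x _ y _ h => Sum.inl.inj h),
    Finset.sum_image (fun x _ y _ h => Sum.inr.inj h)] at key
  have hsq : ∀ x : ℝ, ‖x / Real.sqrt π‖ ^ 2 = x^2 / π := by
    intro x
    rw [norm_div, Real.norm_eq_abs, Real.norm_eq_abs, div_pow, sq_abs, sq_abs,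
      Real.sq_sqrt pi_pos.le]
  simp only [hAm, hBm, hsq, hNV] at key
  have hcomb : ∑ m ∈ s, ((Acos v (2*((m:ℝ)+1)))^2 + (Bsin v (2*((m:ℝ)+1)))^2)
      = (∑ m ∈ s, (Acos v (2*((m:ℝ)+1)))^2 / π + ∑ m ∈ s, (Bsin v (2*((m:ℝ)+1)))^2 / π) * π := by
    rw [← Finset.sum_add_distrib, Finset.sum_mul]
    refine Finset.sum_congr rfl fun m _ => ?_
    field_simp
  rw [hcomb]
  calc (∑ m ∈ s, (Acos v (2*((m:ℝ)+1)))^2 / π + ∑ m ∈ s, (Bsin v (2*((m:ℝ)+1)))^2 / π) * π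
      ≤ N^2 * π := mul_le_mul_of_nonneg_right key pi_pos.le
    _ = π * N^2 := mul_comm _ _


lemma normSqIntegral {v : ℝ → ℝ} (hv : MemLp v 2 μ2) :
    (∫ t, v t * v t ∂μ2) = ((eLpNorm v 2 μ2).toReal)^2 := by
  have h1 : (inner ℝ (hv.toLp v) (hv.toLp v) : ℝ) = ∫ t, v t * v t ∂μ2 := by
    rw [MeasureTheory.L2.inner_def]
    refine integral_congr_ae ?_
    filter_upwards [hv.coeFn_toLp] with t ht
    rw [RCLike.inner_apply, ht]
    simp
  rw [← h1, real_inner_self_eq_norm_sq, MeasureTheory.Lp.norm_toLp]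

lemma eBound (k : ℕ → ℝ) {w : ℝ → ℝ} (hw : Integrable w μ2) (m : ℕ) (θ : ℝ) :
    ‖k (m+1) * (Real.cos (2 * (m+1) * θ) * Acos w (2 * (m+1))
      + Real.sin (2 * (m+1) * θ) * Bsin w (2 * (m+1)))‖
    ≤ |k (m+1)| * (2 * ∫ t, |w t| ∂μ2) := by
  set C : ℝ := ∫ t, |w t| ∂μ2 with hC
  have hC0 : 0 ≤ C := integral_nonneg fun t => abs_nonneg _
  rw [norm_mul, Real.norm_eq_abs, Real.norm_eq_abs]
  refine mul_le_mul_of_nonneg_left ?_ (abs_nonneg _)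
  calc |Real.cos (2 * ((m:ℝ)+1) * θ) * Acos w (2 * (m+1))
        + Real.sin (2 * ((m:ℝ)+1) * θ) * Bsin w (2 * (m+1))|
      ≤ |Real.cos (2 * ((m:ℝ)+1) * θ) * Acos w (2 * (m+1))|
        + |Real.sin (2 * ((m:ℝ)+1) * θ) * Bsin w (2 * (m+1))| := abs_add_le _ _
    _ ≤ 1 * C + 1 * C := by
        rw [abs_mul, abs_mul]
        exact add_le_add
          (mul_le_mul (Real.abs_cos_le_one _) (absA hw _) (abs_nonneg _) one_pos.le)
          (mul_le_mul (Real.abs_sin_le_one _) (absB hw _) (abs_nonneg _) one_pos.le)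
    _ = 2 * C := by ring

lemma Jcont (k : ℕ → ℝ) (hsum : Summable fun m => |k m|) {K : ℝ → ℝ}
    (hK : ∀ θ : ℝ, HasSum (fun m : ℕ => k (m + 1) * Real.cos (2 * (m + 1) * θ)) (K θ))
    {w : ℝ → ℝ} (hw : Integrable w μ2) :
    Continuous (fun θ : ℝ => ∫ t in Set.Ioc (0:ℝ) (2*π), K (θ - t) * w t) ∧
    ∀ θ : ℝ, ‖∫ t in Set.Ioc (0:ℝ) (2*π), K (θ - t) * w t‖
      ≤ ∑' m : ℕ, |k (m+1)| * (2 * ∫ t, |w t| ∂μ2) := by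
  have hu : Summable (fun m : ℕ => |k (m+1)| * (2 * ∫ t, |w t| ∂μ2)) :=
    ((summable_nat_add_iff 1).mpr hsum).mul_right _
  have heq : (fun θ : ℝ => ∫ t in Set.Ioc (0:ℝ) (2*π), K (θ - t) * w t)
      = fun θ : ℝ => ∑' m : ℕ, k (m+1) * (Real.cos (2 * (m+1) * θ) * Acos w (2 * (m+1))
          + Real.sin (2 * (m+1) * θ) * Bsin w (2 * (m+1))) :=
    funext fun θ => ((expandInner k hsum hK hw θ).tsum_eq).symm
  constructor
  · rw [heq]
    exact continuous_tsum (fun m => by fun_prop) hu (fun m θ => eBound k hw m θ)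
  · intro θ
    rw [congrFun heq θ]
    exact tsum_of_norm_bounded hu.hasSum (fun m => eBound k hw m θ)


/-- Stability of the trivial solution: for `0 < λ < λ₁ = -2/k₁` the linearization
`L_λ` is positive definite on `X` (with `⟨L_λ v, v⟩ ≥ (1 - λ|k₁|/2)‖v‖² > 0` for
`v ≠ 0`), while for `λ > λ₁` there is `v ∈ X` (e.g. `v = cos(2θ)`) with
`⟨L_λ v, v⟩ < 0`; hence `u ≡ 0` is linearly stable for `λ < λ₁` and unstable for
`λ > λ₁`. -/
theorem trivial_solution_stability (K : ℝ → ℝ) (hKcont : Continuous K)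
    (hKper : Function.Periodic K (2 * π))
    (k : ℕ → ℝ) (hsum : Summable fun m => |k m|)
    (hK : ∀ θ : ℝ, HasSum (fun m : ℕ => k (m + 1) * Real.cos (2 * (m + 1) * θ)) (K θ))
    (hkneg : ∀ n : ℕ, 1 ≤ n → k n < 0)
    (hkmono : ∀ n : ℕ, 1 ≤ n → k n < k (n + 1)) :
    (∀ lam : ℝ, 0 < lam → lam < -2 / k 1 →
      ∀ v : ℝ → ℝ, Measurable v → Function.Periodic v (2 * π) → MemX v →
        ((1 - lam * |k 1| / 2) *
            ((eLpNorm v 2 (volume.restrict (Set.Ioc (0:ℝ) (2 * π)))).toReal) ^ 2 ≤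
          ∫ θ in (0:ℝ)..(2 * π), Llin K lam v θ * v θ) ∧
        (eLpNorm v 2 (volume.restrict (Set.Ioc (0:ℝ) (2 * π))) ≠ 0 →
          0 < ∫ θ in (0:ℝ)..(2 * π), Llin K lam v θ * v θ)) ∧
    (∀ lam : ℝ, -2 / k 1 < lam →
      ∃ v : ℝ → ℝ, Measurable v ∧ Function.Periodic v (2 * π) ∧ MemX v ∧
        (∀ θ, v θ = Real.cos (2 * θ)) ∧
        (∫ θ in (0:ℝ)..(2 * π), Llin K lam v θ * v θ) < 0) := by
  have hle : (0:ℝ) ≤ 2 * π := by positivity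
  have hπ : (π:ℝ) ≠ 0 := pi_ne_zero
  have hk1 : k 1 < 0 := hkneg 1 le_rfl
  have hk1' : (0:ℝ) < -k 1 := neg_pos.mpr hk1
  have hrwdiv : -2 / k 1 = 2 / (-k 1) := by rw [div_neg, neg_div]
  -- the splitting of the quadratic form
  have hsplit : ∀ (lam : ℝ) (w : ℝ → ℝ), MemLp w 2 μ2 →
      (∫ θ in (0:ℝ)..(2*π), Llin K lam w θ * w θ)
        = (∫ θ, w θ * w θ ∂μ2)
          + (lam * (1/(2*π)))
            * ∫ θ, (∫ t in Set.Ioc (0:ℝ) (2*π), K (θ - t) * w t) * w θ ∂μ2 := by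
    intro lam w hw2
    have hwInt : Integrable w μ2 := hw2.integrable one_le_two
    have hww : Integrable (fun θ => w θ * w θ) μ2 := by
      have := hw2.integrable_sq
      simpa [pow_two] using this
    obtain ⟨hJc, hJb⟩ := Jcont k hsum hK hwInt
    have hJw : Integrable
        (fun θ => (∫ t in Set.Ioc (0:ℝ) (2*π), K (θ - t) * w t) * w θ) μ2 :=
      hwInt.bdd_mul hJc.aestronglyMeasurable (Filter.Eventually.of_forall hJb)
    calc (∫ θ in (0:ℝ)..(2*π), Llin K lam w θ * w θ)
        = ∫ θ, Llin K lam w θ * w θ ∂μ2 := intervalIntegral.integral_of_le hle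
      _ = ∫ θ, (w θ * w θ
            + (lam * (1/(2*π)))
              * ((∫ t in Set.Ioc (0:ℝ) (2*π), K (θ - t) * w t) * w θ)) ∂μ2 := by
          refine integral_congr_ae (Filter.Eventually.of_forall fun θ => ?_)
          simp only [Llin]
          rw [intervalIntegral.integral_of_le hle]
          ring
      _ = _ := by
          rw [MeasureTheory.integral_add hww (hJw.const_mul _),
            MeasureTheory.integral_const_mul]
  constructor
  · -- stability for 0 < lam < lam₁
    intro lam hlam0 hlam1 v hmeas hper hX
    obtain ⟨hv2, -, -, -⟩ := hX
    have hvInt : Integrable v μ2 := hv2.integrable one_le_two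
    set N : ℝ := (eLpNorm v 2 μ2).toReal with hN
    have hQ := expandQ k hsum hK hvInt
    set c : ℕ → ℝ := fun m => (Acos v (2*((m:ℝ)+1)))^2 + (Bsin v (2*((m:ℝ)+1)))^2 with hc
    have hc0 : ∀ m, 0 ≤ c m := fun m => add_nonneg (sq_nonneg _) (sq_nonneg _)
    have hbes := besselSum hv2
    have hcsum : Summable c := summable_of_sum_le hc0 hbes
    have hctsum : (∑' m, c m) ≤ π * N^2 := Summable.tsum_le_of_sum_le hcsum hbes
    have hk1m : ∀ m : ℕ, k 1 ≤ k (m+1) := by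
      intro m
      induction m with
      | zero => exact le_rfl
      | succ n ih => exact ih.trans (hkmono (n+1) (by omega)).le
    have hQ1 : k 1 * (π * N^2) ≤ ∑' m, k (m+1) * c m :=
      calc k 1 * (π * N^2) ≤ k 1 * ∑' m, c m := mul_le_mul_of_nonpos_left hctsum hk1.le
        _ = ∑' m, k 1 * c m := tsum_mul_left.symm
        _ ≤ ∑' m, k (m+1) * c m :=
            Summable.tsum_le_tsum (fun m => mul_le_mul_of_nonneg_right (hk1m m) (hc0 m))
              (hcsum.mul_left _) hQ.summable
    have hconst : 1 - lam * |k 1| / 2 = 1 + lam * k 1 / 2 := by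
      rw [abs_of_neg hk1]; ring
    have hmain : (1 + lam * k 1 / 2) * N^2
        ≤ ∫ θ in (0:ℝ)..(2 * π), Llin K lam v θ * v θ := by
      rw [hsplit lam v hv2, normSqIntegral hv2, ← hQ.tsum_eq, ← hN]
      have hlamc : (0:ℝ) ≤ lam * (1/(2*π)) := by positivity
      have harith : (1 + lam * k 1 / 2) * N^2
          = N^2 + (lam * (1/(2*π))) * (k 1 * (π * N^2)) := by
        field_simp
      rw [harith]
      exact add_le_add_right (mul_le_mul_of_nonneg_left hQ1 hlamc) _
    constructor
    · rw [hconst]; exact hmain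
    · intro hne
      have hNpos : 0 < N := ENNReal.toReal_pos hne hv2.2.ne
      have h2 : 0 < 1 + lam * k 1 / 2 := by
        have hmul : lam * (-k 1) < 2 := (lt_div_iff₀ hk1').mp (by rw [← hrwdiv]; exact hlam1)
        nlinarith
      exact lt_of_lt_of_le (mul_pos h2 (pow_pos hNpos 2)) hmain
  · -- instability for lam > lam₁
    intro lam hlam
    set v : ℝ → ℝ := fun θ => Real.cos (2*θ) with hvdef
    have hvcont : Continuous v := Real.continuous_cos.comp (by fun_prop)
    have hper : Function.Periodic v (2 * π) := by
      intro θ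
      show Real.cos (2*(θ + 2*π)) = Real.cos (2*θ)
      rw [show 2*(θ + 2*π) = (2*θ + 2*π) + 2*π by ring, Real.cos_add_two_pi,
        Real.cos_add_two_pi]
    have hv2 : MemLp v 2 μ2 := by
      refine MemLp.of_bound hvcont.aestronglyMeasurable 1
        (Filter.Eventually.of_forall fun θ => ?_)
      rw [Real.norm_eq_abs]
      exact Real.abs_cos_le_one _
    have hvInt : Integrable v μ2 := hv2.integrable one_le_two
    have hmem : MemX v := by
      refine ⟨hv2, Filter.Eventually.of_forall fun θ => ?_,
        Filter.Eventually.of_forall fun θ => ?_, ?_⟩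
      · show Real.cos (2*(θ + π)) = Real.cos (2*θ)
        rw [show 2*(θ + π) = 2*θ + 2*π by ring, Real.cos_add_two_pi]
      · show Real.cos (2*(2 * π - θ)) = Real.cos (2*θ)
        rw [show 2*(2*π - θ) = -(2*θ) + 2*π + 2*π by ring, Real.cos_add_two_pi,
          Real.cos_add_two_pi, Real.cos_neg]
      · show (∫ θ in (0:ℝ)..(2*π), Real.cos (2*θ)) = 0
        have := intCos 2 (by norm_num)
        simpa using this
    have hA : ∀ m : ℕ, Acos v (2*((m:ℝ)+1)) = if m = 0 then π else 0 := by
      intro m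
      rw [Acos, ← intervalIntegral.integral_of_le hle]
      have key := intCosCos (2*(m+1) : ℤ) (2 : ℤ) (by omega)
      have heqf : (fun t : ℝ => Real.cos (((2*(m+1) : ℤ) : ℝ) * t)
            * Real.cos (((2:ℤ) : ℝ) * t))
          = fun t : ℝ => Real.cos (2*((m:ℝ)+1)*t) * v t := by
        funext t
        have h1 : ((2*(m+1) : ℤ) : ℝ) = 2*((m:ℝ)+1) := by push_cast; ring
        have h2 : ((2 : ℤ) : ℝ) = 2 := by norm_num
        rw [h1, h2, hvdef]
      rw [heqf] at key
      rw [key]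
      by_cases h : m = 0
      · subst h; norm_num
      · have h3 : ¬((2*(m+1) : ℤ) = 2) := by omega
        simp [h, h3]
    have hB : ∀ m : ℕ, Bsin v (2*((m:ℝ)+1)) = 0 := by
      intro m
      rw [Bsin, ← intervalIntegral.integral_of_le hle]
      have key := intSinCos (2*(m+1) : ℤ) (2 : ℤ)
      have heqf : (fun t : ℝ => Real.sin (((2*(m+1) : ℤ) : ℝ) * t)
            * Real.cos (((2:ℤ) : ℝ) * t))
          = fun t : ℝ => Real.sin (2*((m:ℝ)+1)*t) * v t := by
        funext t
        have h1 : ((2*(m+1) : ℤ) : ℝ) = 2*((m:ℝ)+1) := by push_cast; ring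
        have h2 : ((2 : ℤ) : ℝ) = 2 := by norm_num
        rw [h1, h2, hvdef]
      rw [heqf] at key
      rw [key]
    have hQ := expandQ k hsum hK hvInt
    have hterm : (fun m : ℕ => k (m+1) * ((Acos v (2*((m:ℝ)+1)))^2 + (Bsin v (2*((m:ℝ)+1)))^2))
        = fun m : ℕ => if m = 0 then k 1 * π^2 else 0 := by
      funext m
      rw [hA m, hB m]
      by_cases h : m = 0 <;> simp [h]
    rw [hterm] at hQ
    have hQval : (∫ θ, (∫ t in Set.Ioc (0:ℝ) (2*π), K (θ - t) * v t) * v θ ∂μ2)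
        = k 1 * π^2 := hQ.unique (hasSum_ite_eq 0 _)
    have hvv : (∫ θ, v θ * v θ ∂μ2) = π := by
      rw [← intervalIntegral.integral_of_le hle]
      have key := intCosCos (2 : ℤ) (2 : ℤ) (by norm_num)
      have heqf : (fun t : ℝ => Real.cos (((2:ℤ) : ℝ) * t) * Real.cos (((2:ℤ) : ℝ) * t))
          = fun t : ℝ => v t * v t := by
        funext t
        have h2 : ((2 : ℤ) : ℝ) = 2 := by norm_num
        rw [h2, hvdef]
      rw [heqf] at key
      rw [key]
      simp
    refine ⟨v, hvcont.measurable, hper, hmem, fun θ => rfl, ?_⟩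
    rw [hsplit lam v hv2, hvv, hQval]
    have hmul : 2 < lam * (-k 1) := (div_lt_iff₀ hk1').mp (by rw [← hrwdiv]; exact hlam)
    have hfact : π + lam * (1/(2*π)) * (k 1 * π^2) = π * (1 + lam * k 1 / 2) := by
      field_simp
    rw [hfact]
    apply mul_neg_of_pos_of_neg pi_pos
    nlinarith
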